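/- If α is irrational but not badly approximable (i.e., its partial quotients a_j are unbounded), then for every C > 0 there exists n such that the mesh ratio ρ_n of the first n points of the Kronecker sequence iα mod 1 exceeds C; hence the sequence is not quasi-uniform. -/

import Mathlib

open scoped BigOperators

/-- The Gauss-map iterates: `alphaSeq α m` is `α_m`. -/
noncomputable def alphaSeq (α : ℝ) : ℕ → ℝ
  | 0 => Int.fract α
  | m + 1 => Int.fract (1 / alphaSeq α m)

/-- Partial quotients of the continued fraction of `α`: `partialQuot α (m+1) = a_{m+1} = ⌊1/α_m⌋`. -/
noncomputable def partialQuot (α : ℝ) : ℕ → ℕ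
  | 0 => (⌊α⌋).toNat
  | m + 1 => (⌊1 / alphaSeq α m⌋).toNat

/-- `eta α (m+1) = η_m = ∏_{j=0}^m α_j`, with `eta α 0 = η_{-1} = 1`. -/
noncomputable def eta (α : ℝ) : ℕ → ℝ
  | 0 => 1
  | m + 1 => eta α m * alphaSeq α m

/-- `denomSeq α m = s_m`. -/
noncomputable def denomSeq (α : ℝ) : ℕ → ℕ
  | 0 => 1
  | 1 => partialQuot α 1
  | m + 2 => partialQuot α (m + 2) * denomSeq α (m + 1) + denomSeq α m

/-- `denomPred α m = s_{m-1}`, with `s_{-1} = 0`. -/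
noncomputable def denomPred (α : ℝ) : ℕ → ℕ
  | 0 => 0
  | m + 1 => denomSeq α m

/-- `nSeq α m = n_m = s_m + s_{m-1}` (so `n_0 = 1`). -/
noncomputable def nSeq (α : ℝ) (m : ℕ) : ℕ := denomSeq α m + denomPred α m

/-- The Kronecker sequence `x_i = iα mod 1`. -/
noncomputable def kron (α : ℝ) (i : ℕ) : ℝ := Int.fract (i * α)

/-- Fill distance of the first `n` points of `x` in `[0,1]`. -/
noncomputable def fillDist (x : ℕ → ℝ) (n : ℕ) : ℝ :=
  ⨆ y : Set.Icc (0:ℝ) 1, ⨅ i : Fin n, |(y : ℝ) - x i|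

/-- Separation radius of the first `n` points of `x`. -/
noncomputable def sepRad (x : ℕ → ℝ) (n : ℕ) : ℝ :=
  (1 / 2) * ⨅ p : {p : Fin n × Fin n // p.1 < p.2}, |x p.1.1 - x p.1.2|

/-- The first `n` Kronecker points, sorted increasingly. -/
noncomputable def sortedKron (α : ℝ) (n : ℕ) : List ℝ :=
  ((Finset.range n).image (kron α)).sort (· ≤ ·)

/-- The `n` consecutive gap lengths of the first `n` Kronecker points,
including the wrap-around gap up to `1`. -/
noncomputable def kronGaps (α : ℝ) (n : ℕ) : List ℝ :=
  List.zipWith (fun a b => b - a) (sortedKron α n) ((sortedKron α n).tail ++ [1])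

section NT
variable {α : ℝ}
noncomputable def pNum (α : ℝ) : ℕ → ℤ
  | 0 => 0
  | 1 => 1
  | m + 2 => partialQuot α (m + 2) * pNum α (m + 1) + pNum α m


lemma alpha_props (hirr : Irrational α) (m : ℕ) :
    Irrational (alphaSeq α m) ∧ 0 < alphaSeq α m ∧ alphaSeq α m < 1 := by
  induction m with
  | zero =>
    have h1 : Irrational (Int.fract α) := by
      simpa [Int.fract, sub_eq_add_neg] using hirr.sub_intCast ⌊α⌋
    have h0 : alphaSeq α 0 = Int.fract α := rfl
    refine ⟨h0 ▸ h1, ?_, h0 ▸ Int.fract_lt_one α⟩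
    rw [h0]
    rcases (Int.fract_nonneg α).lt_or_eq with h | h
    · exact h
    · exact absurd h.symm (by simpa using h1.ne_int 0)
  | succ m ih =>
    obtain ⟨hi, hp, _⟩ := ih
    have hinv : Irrational (1 / alphaSeq α m) := by
      simpa [one_div] using hi.inv
    have h1 : Irrational (Int.fract (1 / alphaSeq α m)) := by
      simpa [Int.fract, sub_eq_add_neg] using hinv.sub_intCast ⌊1 / alphaSeq α m⌋
    have h0 : alphaSeq α (m+1) = Int.fract (1 / alphaSeq α m) := rfl
    refine ⟨h0 ▸ h1, ?_, h0 ▸ Int.fract_lt_one _⟩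
    rw [h0]
    rcases (Int.fract_nonneg (1 / alphaSeq α m)).lt_or_eq with h | h
    · exact h
    · exact absurd h.symm (by simpa using h1.ne_int 0)

lemma floor_inv_ge_one (hirr : Irrational α) (m : ℕ) : 1 ≤ ⌊1 / alphaSeq α m⌋ := by
  obtain ⟨_, hp, hl⟩ := alpha_props hirr m
  have : (1:ℝ) ≤ 1 / alphaSeq α m := by
    rw [le_div_iff₀ hp]; linarith
  exact_mod_cast Int.le_floor.2 (by exact_mod_cast this)

lemma partialQuot_cast (hirr : Irrational α) (m : ℕ) :
    (partialQuot α (m + 1) : ℝ) = (⌊1 / alphaSeq α m⌋ : ℝ) := by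
  have := floor_inv_ge_one hirr m
  show ((⌊1 / alphaSeq α m⌋.toNat : ℕ) : ℝ) = _
  have h2 : ((⌊1 / alphaSeq α m⌋.toNat : ℤ) : ℝ) = ((⌊1 / alphaSeq α m⌋ : ℤ) : ℝ) := by
    rw [Int.toNat_of_nonneg (by omega)]
  exact_mod_cast h2

lemma partialQuot_pos (hirr : Irrational α) (m : ℕ) : 1 ≤ partialQuot α (m + 1) := by
  have h := floor_inv_ge_one hirr m
  simp only [partialQuot]; omega

lemma gauss_rel (hirr : Irrational α) (m : ℕ) :
    1 / alphaSeq α m = (partialQuot α (m+1) : ℝ) + alphaSeq α (m+1) := by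
  rw [partialQuot_cast hirr m]
  have : alphaSeq α (m+1) = Int.fract (1 / alphaSeq α m) := rfl
  rw [this, Int.fract]; ring

lemma eta_pos (hirr : Irrational α) (m : ℕ) : 0 < eta α m := by
  induction m with
  | zero => norm_num [eta]
  | succ m ih => exact mul_pos ih (alpha_props hirr m).2.1

lemma eta_le_one (hirr : Irrational α) (m : ℕ) : eta α m ≤ 1 := by
  induction m with
  | zero => norm_num [eta]
  | succ m ih =>
    have := (alpha_props hirr m).2.2
    have := (alpha_props hirr m).2.1
    calc eta α m * alphaSeq α m ≤ 1 * 1 := by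
          apply mul_le_mul ih (by linarith) (by linarith) (by norm_num)
      _ = 1 := by norm_num

lemma eta_lt_one (hirr : Irrational α) (m : ℕ) : eta α (m+1) < 1 := by
  have h1 := eta_le_one hirr m
  have h2 := (alpha_props hirr m).2.2
  have h3 := (alpha_props hirr m).2.1
  have h0 := eta_pos hirr m
  calc eta α (m+1) = eta α m * alphaSeq α m := rfl
    _ < 1 * 1 := by nlinarith
    _ = 1 := by norm_num

lemma eta_rec (hirr : Irrational α) (m : ℕ) :
    eta α m = (partialQuot α (m+1) : ℝ) * eta α (m+1) + eta α (m+2) := by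
  have hp := (alpha_props hirr m).2.1
  have h1 : eta α (m+1) = eta α m * alphaSeq α m := rfl
  have h2 : eta α (m+2) = eta α (m+1) * alphaSeq α (m+1) := rfl
  have h3 := gauss_rel hirr m
  have : eta α m = eta α (m+1) * (1 / alphaSeq α m) := by
    rw [h1]; field_simp
  rw [this, h3, h2]; ring

/-- main identity: s_m x - p_m = (-1)^m η_m -/
lemma key_identity (hirr : Irrational α) (m : ℕ) :
    (denomSeq α m : ℝ) * Int.fract α - (pNum α m : ℝ) = (-1)^m * eta α (m+1) := by
  induction m using Nat.strong_induction_on with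
  | _ m ih =>
  match m with
  | 0 =>
    simp [denomSeq, pNum, eta, alphaSeq]
  | 1 =>
    have h3 := gauss_rel hirr 0
    have hp := (alpha_props hirr 0).2.1
    have e2 : eta α 2 = eta α 1 * alphaSeq α 1 := rfl
    have e1 : eta α 1 = 1 * alphaSeq α 0 := rfl
    have hx : alphaSeq α 0 = Int.fract α := rfl
    simp only [denomSeq, pNum, e2, e1, pow_one]
    rw [← hx]
    have : alphaSeq α 1 = 1 / alphaSeq α 0 - (partialQuot α 1 : ℝ) := by
      rw [h3]; ring
    rw [this]
    push_cast
    field_simp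
    ring
  | (m+2) =>
    have h1 := ih (m+1) (by omega)
    have h0 := ih m (by omega)
    have hrec := eta_rec hirr (m+1)
    have hd : (denomSeq α (m+2) : ℝ) = (partialQuot α (m+2) : ℝ) * (denomSeq α (m+1) : ℝ) + (denomSeq α m : ℝ) := by
      push_cast [denomSeq]; ring
    have hpn : (pNum α (m+2) : ℝ) = (partialQuot α (m+2) : ℝ) * (pNum α (m+1) : ℝ) + (pNum α m : ℝ) := by
      push_cast [pNum]; ring
    rw [hd, hpn]
    have : (partialQuot α (m+2) : ℝ) * ((denomSeq α (m+1) : ℝ) * Int.fract α - (pNum α (m+1) : ℝ))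
        + ((denomSeq α m : ℝ) * Int.fract α - (pNum α m : ℝ))
        = (partialQuot α (m+2) : ℝ) * ((-1)^(m+1) * eta α (m+2)) + (-1)^m * eta α (m+1) := by
      rw [h1, h0]
    have hgoal : (-1:ℝ)^(m+2) * eta α (m+3)
        = (partialQuot α (m+2) : ℝ) * ((-1)^(m+1) * eta α (m+2)) + (-1)^m * eta α (m+1) := by
      rw [hrec]; ring
    nlinarith [this, hgoal]

lemma sum_identity (hirr : Irrational α) (m : ℕ) :
    (denomSeq α (m+1) : ℝ) * eta α (m+1) + (denomSeq α m : ℝ) * eta α (m+2) = 1 := by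
  induction m with
  | zero =>
    have h3 := gauss_rel hirr 0
    have hp := (alpha_props hirr 0).2.1
    have e2 : eta α 2 = eta α 1 * alphaSeq α 1 := rfl
    have e1 : eta α 1 = 1 * alphaSeq α 0 := rfl
    simp only [denomSeq, e2, e1, Nat.cast_one]
    have : alphaSeq α 1 = 1 / alphaSeq α 0 - (partialQuot α 1 : ℝ) := by rw [h3]; ring
    rw [this]
    field_simp
    ring
  | succ m ih =>
    have hrec := eta_rec hirr (m+1)
    have hd : (denomSeq α (m+2) : ℝ) = (partialQuot α (m+2) : ℝ) * (denomSeq α (m+1) : ℝ) + (denomSeq α m : ℝ) := by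
      push_cast [denomSeq]; ring
    rw [hd]
    have he3 : eta α (m+3) = eta α (m+1) - (partialQuot α (m+2) : ℝ) * eta α (m+2) := by
      rw [hrec]; ring
    rw [he3]
    nlinarith [ih]

lemma denomSeq_ge_one (hirr : Irrational α) (m : ℕ) : 1 ≤ denomSeq α m := by
  induction m using Nat.strong_induction_on with
  | _ m ih =>
  match m with
  | 0 => simp [denomSeq]
  | 1 => simpa [denomSeq] using partialQuot_pos hirr 0
  | (m+2) =>
    have := ih m (by omega)
    simp only [denomSeq]; omega

lemma denomSeq_succ_ge (hirr : Irrational α) (m : ℕ) :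
    partialQuot α (m+1) * denomSeq α m ≤ denomSeq α (m+1) := by
  match m with
  | 0 => simp [denomSeq]
  | (m+1) => exact Nat.le_add_right _ _

/-- Given B, find q ≥ 1, p, with |q·fract α − p| = e, 0 < e, and (a)·q·e < 1 for a > B. -/
lemma good_approx (hirr : Irrational α) (hub : ∀ B : ℕ, ∃ j ≥ 1, B < partialQuot α j) (B : ℕ) :
    ∃ q : ℕ, ∃ p : ℤ, ∃ e : ℝ, 1 ≤ q ∧ 0 < e ∧ e < 1 ∧
      |(q : ℝ) * Int.fract α - (p : ℝ)| = e ∧ ((B:ℝ)+1) * q * e < 1 := by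
  obtain ⟨j, hj1, hjB⟩ := hub B
  obtain ⟨m, rfl⟩ : ∃ m, j = m + 1 := ⟨j - 1, by omega⟩
  refine ⟨denomSeq α m, pNum α m, eta α (m+1), denomSeq_ge_one hirr m,
    eta_pos hirr (m+1), eta_lt_one hirr m, ?_, ?_⟩
  · rw [key_identity hirr m, abs_mul, abs_pow, abs_neg, abs_one, one_pow, one_mul,
      abs_of_pos (eta_pos hirr (m+1))]
  · have hsum := sum_identity hirr m
    have h2 : 0 < (denomSeq α m : ℝ) * eta α (m+2) :=
      mul_pos (by exact_mod_cast denomSeq_ge_one hirr m) (eta_pos hirr (m+2))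
    have h1 : (denomSeq α (m+1) : ℝ) * eta α (m+1) < 1 := by linarith
    have hge : ((B:ℝ)+1) * (denomSeq α m : ℝ) ≤ (denomSeq α (m+1) : ℝ) := by
      have := denomSeq_succ_ge hirr m
      have hB : B + 1 ≤ partialQuot α (m+1) := hjB
      have : (B+1) * denomSeq α m ≤ denomSeq α (m+1) := by
        calc (B+1) * denomSeq α m ≤ partialQuot α (m+1) * denomSeq α m :=
              Nat.mul_le_mul_right _ hB
          _ ≤ denomSeq α (m+1) := denomSeq_succ_ge hirr m
      exact_mod_cast this
    calc ((B:ℝ)+1) * (denomSeq α m) * eta α (m+1)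
        ≤ (denomSeq α (m+1) : ℝ) * eta α (m+1) := by
          apply mul_le_mul_of_nonneg_right hge (eta_pos hirr (m+1)).le
      _ < 1 := h1

end NT

lemma fillDist_lb (x : ℕ → ℝ) (n : ℕ) (hn : 1 ≤ n) :
    1 / (2 * ((n : ℝ) + 1)) ≤ fillDist x n := by
  set r : ℝ := 1 / (2 * ((n : ℝ) + 1)) with hr
  have hnpos : (0:ℝ) < (n:ℝ) + 1 := by positivity
  have hrpos : 0 < r := by positivity
  set y : Fin (n+1) → ℝ := fun k => (2 * (k:ℝ) + 1) / (2 * ((n:ℝ) + 1)) with hy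
  -- each candidate is in [0,1]
  have hymem : ∀ k : Fin (n+1), y k ∈ Set.Icc (0:ℝ) 1 := by
    intro k
    have hk : (k : ℝ) ≤ (n : ℝ) := by exact_mod_cast Nat.lt_succ_iff.1 k.2
    constructor
    · positivity
    · rw [div_le_one (by positivity)]; linarith
  -- some candidate is far from all points
  have hfar : ∃ k : Fin (n+1), ∀ i : Fin n, r ≤ |y k - x i| := by
    by_contra hcon
    push_neg at hcon
    choose f hf using hcon
    obtain ⟨k, l, hkl, hfkl⟩ := Fintype.exists_ne_map_eq_of_card_lt f (by simp)
    have h1 : |y k - y l| < 2 * r :=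
      calc |y k - y l| ≤ |y k - x (f k)| + |x (f k) - y l| := abs_sub_le _ _ _
        _ = |y k - x (f k)| + |y l - x (f l)| := by
              rw [hfkl, abs_sub_comm (x ((f l) : ℕ)) (y l)]
        _ < r + r := add_lt_add (hf k) (hf l)
        _ = 2 * r := by ring
    have hkl' : ((k:ℤ) : ℝ) ≠ ((l:ℤ) : ℝ) := by
      simp only [Int.cast_natCast, ne_eq, Nat.cast_inj]
      exact fun h => hkl (Fin.ext h)
    have h2 : (1:ℝ) ≤ |(k:ℝ) - (l:ℝ)| := by
      have h2' : (1:ℤ) ≤ |((k:ℕ):ℤ) - ((l:ℕ):ℤ)| := Int.one_le_abs (sub_ne_zero.2 (by exact_mod_cast hkl'))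
      exact_mod_cast h2'
    have h3 : y k - y l = ((k:ℝ) - (l:ℝ)) / ((n:ℝ) + 1) := by
      rw [hy]; field_simp; ring
    have h4 : |y k - y l| = |(k:ℝ) - (l:ℝ)| / ((n:ℝ) + 1) := by
      rw [h3, abs_div, abs_of_pos hnpos]
    have h5 : 2 * r = 1 / ((n:ℝ)+1) := by rw [hr]; field_simp
    rw [h4, h5, div_lt_div_iff₀ hnpos hnpos] at h1
    nlinarith
  obtain ⟨k, hk⟩ := hfar
  -- bounded above
  have hbdd : BddAbove (Set.range fun z : Set.Icc (0:ℝ) 1 => ⨅ i : Fin n, |(z : ℝ) - x i|) := by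
    refine ⟨1 + |x 0|, ?_⟩
    rintro _ ⟨z, rfl⟩
    have hlow : BddBelow (Set.range fun i : Fin n => |(z : ℝ) - x i|) :=
      ⟨0, by rintro _ ⟨i, rfl⟩; positivity⟩
    have h0 : (⨅ i : Fin n, |(z : ℝ) - x i|) ≤ |(z:ℝ) - x 0| := by
      simpa using ciInf_le hlow (⟨0, hn⟩ : Fin n)
    calc (⨅ i : Fin n, |(z : ℝ) - x i|) ≤ |(z:ℝ) - x 0| := h0
      _ ≤ |(z:ℝ)| + |x 0| := abs_sub _ _
      _ ≤ 1 + |x 0| := by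
          have := z.2.1; have := z.2.2
          have : |(z:ℝ)| ≤ 1 := abs_le.2 ⟨by linarith, by linarith⟩
          linarith
  have : Nonempty (Fin n) := ⟨⟨0, hn⟩⟩
  have hstep : r ≤ ⨅ i : Fin n, |y k - x i| := le_ciInf hk
  calc r ≤ ⨅ i : Fin n, |((⟨y k, hymem k⟩ : Set.Icc (0:ℝ) 1) : ℝ) - x i| := hstep
    _ ≤ fillDist x n := le_ciSup hbdd _

lemma sepRad_le {x : ℕ → ℝ} {n : ℕ} (i j : Fin n) (h : i < j) :
    sepRad x n ≤ |x i - x j| / 2 := by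
  have hb : BddBelow (Set.range fun p : {p : Fin n × Fin n // p.1 < p.2} => |x p.1.1 - x p.1.2|) :=
    ⟨0, by rintro _ ⟨p, rfl⟩; positivity⟩
  have hle := ciInf_le hb (⟨(i, j), h⟩ : {p : Fin n × Fin n // p.1 < p.2})
  unfold sepRad
  linarith

lemma sepRad_pos {x : ℕ → ℝ} {n : ℕ} (hn : 2 ≤ n)
    (hx : ∀ i j : Fin n, i < j → x i ≠ x j) : 0 < sepRad x n := by
  have hne : Nonempty {p : Fin n × Fin n // p.1 < p.2} :=
    ⟨⟨(⟨0, by omega⟩, ⟨1, by omega⟩), by simp [Fin.lt_def]⟩⟩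
  set f : {p : Fin n × Fin n // p.1 < p.2} → ℝ := fun p => |x p.1.1 - x p.1.2| with hf
  have hnee : (Set.range f).Nonempty := Set.range_nonempty f
  have hmem := hnee.csInf_mem (Set.finite_range f)
  obtain ⟨p, hp⟩ := hmem
  have hppos : 0 < f p := abs_pos.2 (sub_ne_zero.2 (hx _ _ p.2))
  have : sepRad x n = (1/2) * sInf (Set.range f) := rfl
  rw [this, ← hp]
  positivity

section KronMain

lemma kron_ne {α : ℝ} (hirr : Irrational α) {i j : ℕ} (h : i ≠ j) : kron α i ≠ kron α j := by
  intro he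
  obtain ⟨z, hz⟩ := Int.fract_eq_fract.1 he
  have hd : ((i:ℝ) - (j:ℝ)) ≠ 0 := by
    intro h0
    exact h (by exact_mod_cast sub_eq_zero.1 h0)
  have hz' : ((i:ℝ) - (j:ℝ)) * α = (z:ℝ) := by rw [sub_mul]; exact hz
  refine hirr ⟨(z:ℚ) / ((i:ℚ) - (j:ℚ)), ?_⟩
  have hdq : ((i:ℚ) - (j:ℚ)) ≠ 0 := by
    intro h0
    exact h (by exact_mod_cast sub_eq_zero.1 h0)
  push_cast
  rw [div_eq_iff hd]
  linarith [hz']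

lemma kron_fract {α : ℝ} (k : ℕ) : kron α k = Int.fract ((k:ℝ) * Int.fract α) := by
  unfold kron
  have : (k:ℝ) * α = (k:ℝ) * Int.fract α + ((k * ⌊α⌋ : ℤ) : ℝ) := by
    rw [Int.fract]; push_cast; ring
  rw [this, Int.fract_add_intCast]

/-- If `α` is irrational but not badly approximable, the mesh ratio of the
Kronecker sequence is unbounded, so the sequence is not quasi-uniform. -/
theorem kronecker_not_badly_approximable_not_quasi_uniform (α : ℝ) (hpos : 0 < α)
    (hirr : Irrational α) (hub : ∀ B : ℕ, ∃ j ≥ 1, B < partialQuot α j) :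
    ∀ C > (0 : ℝ), ∃ n : ℕ, C < fillDist (kron α) n / sepRad (kron α) n := by
  intro C hC
  set B : ℕ := ⌈4*C⌉₊ + 4 with hB
  obtain ⟨q, p, e, hq1, he0, he1, habs, hprod⟩ := good_approx hirr hub B
  set n : ℕ := 2*q + 1 with hn
  refine ⟨n, ?_⟩
  have hq0 : (0:ℝ) < (q:ℝ) := by exact_mod_cast hq1
  have hBC : 4*C ≤ (B:ℝ) := by
    have h1 := Nat.le_ceil (4*C)
    have h2 : (⌈4*C⌉₊ : ℝ) ≤ (B:ℝ) := by rw [hB]; push_cast; linarith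
    linarith
  have hB4 : (4:ℝ) ≤ (B:ℝ) := by
    rw [hB]; push_cast
    have := Nat.cast_nonneg (α := ℝ) ⌈4*C⌉₊
    linarith
  have hq1' : (1:ℝ) ≤ (q:ℝ) := by exact_mod_cast hq1
  have h5e : 5 * ((q:ℝ) * e) < 1 := by nlinarith
  have hqe : 0 < (q:ℝ) * e := mul_pos hq0 he0
  have h2e : 2 * e < 1 := by nlinarith [mul_le_mul_of_nonneg_right hq1' he0.le]
  -- the close pair
  have hpair : ∃ i j : Fin n, i < j ∧ |kron α (i:ℕ) - kron α (j:ℕ)| = e := by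
    rcases (abs_eq he0.le).1 habs with hcase | hcase
    · -- q·x = p + e
      refine ⟨⟨0, by omega⟩, ⟨q, by omega⟩, by simp [Fin.lt_def]; omega, ?_⟩
      have h0 : kron α 0 = 0 := by simp [kron]
      have hqv : kron α q = e := by
        rw [kron_fract]
        have hx : (q:ℝ) * Int.fract α = e + ((p:ℤ):ℝ) := by linarith
        rw [hx, Int.fract_add_intCast, Int.fract_eq_self.2 ⟨he0.le, he1⟩]
      show |kron α 0 - kron α q| = e
      rw [h0, hqv, zero_sub, abs_neg, abs_of_pos he0]
    · -- q·x = p - e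
      refine ⟨⟨q, by omega⟩, ⟨2*q, by omega⟩, by simp [Fin.lt_def]; omega, ?_⟩
      have hfe : Int.fract e = e := Int.fract_eq_self.2 ⟨he0.le, he1⟩
      have hqv : kron α q = 1 - e := by
        rw [kron_fract]
        have hx : (q:ℝ) * Int.fract α = -e + ((p:ℤ):ℝ) := by linarith
        rw [hx, Int.fract_add_intCast, Int.fract_neg (by rw [hfe]; exact he0.ne'), hfe]
      have h2qv : kron α (2*q) = 1 - 2*e := by
        rw [kron_fract]
        have hf2e : Int.fract (2*e) = 2*e := Int.fract_eq_self.2 ⟨by linarith, by linarith⟩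
        have hx : ((2*q : ℕ):ℝ) * Int.fract α = -(2*e) + (((2*p):ℤ):ℝ) := by
          push_cast; linarith
        rw [hx, Int.fract_add_intCast, Int.fract_neg (by rw [hf2e]; positivity), hf2e]
      show |kron α q - kron α (2*q)| = e
      rw [hqv, h2qv, show (1 - e) - (1 - 2*e) = e by ring, abs_of_pos he0]
  obtain ⟨i, j, hij, hije⟩ := hpair
  have hsep_le : sepRad (kron α) n ≤ e / 2 := by
    have := sepRad_le (x := kron α) i j hij
    rw [hije] at this
    exact this
  have hsep_pos : 0 < sepRad (kron α) n := by
    refine sepRad_pos (by omega) ?_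
    intro a b hab
    exact kron_ne hirr (Nat.ne_of_lt hab)
  have hfill : 1 / (2 * ((n : ℝ) + 1)) ≤ fillDist (kron α) n := fillDist_lb _ _ (by omega)
  rw [lt_div_iff₀ hsep_pos]
  have hmid : C * (e/2) < 1 / (2 * ((n:ℝ) + 1)) := by
    rw [lt_div_iff₀ (by positivity)]
    have hn' : ((n:ℝ) + 1) = 2*(q:ℝ) + 2 := by rw [hn]; push_cast; ring
    rw [hn']
    have h4 : 4*C*((q:ℝ)*e) < 1 := by
      nlinarith [mul_le_mul_of_nonneg_right hBC hqe.le]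
    nlinarith [h4, mul_nonneg (mul_nonneg (sub_nonneg.2 hq1') hC.le) he0.le]
  calc C * sepRad (kron α) n ≤ C * (e/2) := mul_le_mul_of_nonneg_left hsep_le hC.le
    _ < 1 / (2 * ((n:ℝ) + 1)) := hmid
    _ ≤ fillDist (kron α) n := hfill

end KronMain
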